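/- In the same setting, as t → ∞ the expected first Metropolis–Hastings iterate converges: E_{p^{(1)}_{θ,y}}[Y] → y + Σ_{y'∈𝒩(y)} min(q(y,y'), q(y',y))·(y'−y). -/

import Mathlib

open Finset Filter
open scoped RealInnerProductSpace Topology

/-- High-temperature limit of the expected first Metropolis–Hastings iterate:
it converges to `y + Σ_{y'∈𝒩(y)} min(q(y,y'), q(y',y))·(y'−y)` as `t → ∞`. -/
theorem expected_first_iterate_high_temperature_limit {d : ℕ}
    (y : EuclideanSpace ℝ (Fin d)) (N : Finset (EuclideanSpace ℝ (Fin d)))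
    (hy : y ∉ N)
    (φ : EuclideanSpace ℝ (Fin d) → ℝ) (θ : EuclideanSpace ℝ (Fin d))
    (q : EuclideanSpace ℝ (Fin d) → EuclideanSpace ℝ (Fin d) → ℝ)
    (hq_pos : ∀ y' ∈ N, 0 < q y y' ∧ 0 < q y' y) :
    Tendsto
      (fun t : ℝ => y + ∑ y' ∈ N,
        (q y y' * min 1 ((q y' y / q y y') *
          Real.exp ((⟪θ, y' - y⟫ + φ y' - φ y) / t))) • (y' - y))
      atTop
      (𝓝 (y + ∑ y' ∈ N, min (q y y') (q y' y) • (y' - y))) := by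
  apply Tendsto.const_add
  apply tendsto_finset_sum
  intro y' hy'
  obtain ⟨h1, h2⟩ := hq_pos y' hy'
  apply Tendsto.smul_const
  have hc : Tendsto (fun t : ℝ => (⟪θ, y' - y⟫ + φ y' - φ y) / t) atTop (𝓝 0) :=
    tendsto_const_nhds.div_atTop tendsto_id
  have he : Tendsto (fun t : ℝ => Real.exp ((⟪θ, y' - y⟫ + φ y' - φ y) / t))
      atTop (𝓝 1) := by
    simpa [Function.comp_def] using (Real.continuous_exp.tendsto 0).comp hc
  have : Tendsto (fun t : ℝ => q y y' * min 1 ((q y' y / q y y') *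
      Real.exp ((⟪θ, y' - y⟫ + φ y' - φ y) / t))) atTop
      (𝓝 (q y y' * min 1 ((q y' y / q y y') * 1))) := by
    exact tendsto_const_nhds.mul ((tendsto_const_nhds.min
      (tendsto_const_nhds.mul he)))
  convert this using 2
  rw [mul_one, mul_min_of_nonneg _ _ h1.le, mul_one,
    mul_div_cancel₀ _ h1.ne']
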